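/- The Farey group Γ is isomorphic to the free product ℤ/2ℤ * ℤ/2ℤ * ℤ/2ℤ: the canonical group homomorphism from (ℤ/2ℤ) * (ℤ/2ℤ) * (ℤ/2ℤ) to PSL(2,ℤ) sending the three generators of the free factors to a, b, c respectively is injective, and its image is Γ. -/

import Mathlib

open scoped MatrixGroups OnePoint
open Matrix MeasureTheory Filter Topology

noncomputable section

namespace Farey

/-- Möbius action of a real 2×2 matrix on `ℝ ∪ {∞}`. -/
def mobAux (M : Matrix (Fin 2) (Fin 2) ℝ) : OnePoint ℝ → OnePoint ℝ :=
  OnePoint.rec (if M 1 0 = 0 then ∞ else ((M 0 0 / M 1 0 : ℝ) : OnePoint ℝ))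
    (fun r => if M 1 0 * r + M 1 1 = 0 then ∞
      else (((M 0 0 * r + M 0 1) / (M 1 0 * r + M 1 1) : ℝ) : OnePoint ℝ))

@[simp] lemma mobAux_infty (M : Matrix (Fin 2) (Fin 2) ℝ) :
    mobAux M ∞ = if M 1 0 = 0 then ∞ else ((M 0 0 / M 1 0 : ℝ) : OnePoint ℝ) := rfl

@[simp] lemma mobAux_coe (M : Matrix (Fin 2) (Fin 2) ℝ) (r : ℝ) :
    mobAux M (r : OnePoint ℝ) = if M 1 0 * r + M 1 1 = 0 then ∞
      else (((M 0 0 * r + M 0 1) / (M 1 0 * r + M 1 1) : ℝ) : OnePoint ℝ) := rfl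

lemma mobAux_neg (M : Matrix (Fin 2) (Fin 2) ℝ) : mobAux (-M) = mobAux M := by
  funext x
  induction x using OnePoint.rec with
  | infty => simp [Matrix.neg_apply, neg_eq_zero, neg_div_neg_eq]
  | coe r =>
      rw [mobAux_coe, mobAux_coe]
      have h1 : (-M) 1 0 * r + (-M) 1 1 = -(M 1 0 * r + M 1 1) := by
        simp [Matrix.neg_apply]; ring
      have h0 : (-M) 0 0 * r + (-M) 0 1 = -(M 0 0 * r + M 0 1) := by
        simp [Matrix.neg_apply]; ring
      rw [h1, h0]
      simp only [neg_eq_zero, neg_div_neg_eq]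

end Farey

namespace Farey

/-- Möbius action of an integral 2×2 special linear matrix on `ℝ ∪ {∞}`. -/
def mobSL (g : SL(2, ℤ)) : OnePoint ℝ → OnePoint ℝ :=
  mobAux ((g : Matrix (Fin 2) (Fin 2) ℤ).map (Int.cast : ℤ → ℝ))

lemma mobSL_mul_center (g z : SL(2, ℤ)) (hz : z ∈ Subgroup.center SL(2, ℤ)) :
    mobSL (g * z) = mobSL g := by
  obtain ⟨r, hr, hscalar⟩ := Matrix.SpecialLinearGroup.mem_center_iff.mp hz
  have hr' : r = 1 ∨ r = -1 := by
    have : IsUnit r := IsUnit.of_mul_eq_one (r ^ 1) (by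
      simpa [pow_succ, Fintype.card_fin] using hr)
    exact Int.isUnit_iff.mp this
  rcases hr' with h1 | h1
  · have : z = 1 := by
      ext i j
      have := congrFun (congrFun hscalar i) j
      simp [h1] at this
      simp [← this]
    simp [this]
  · have hzmat : (z : Matrix (Fin 2) (Fin 2) ℤ) = -1 := by
      ext i j
      have := congrFun (congrFun hscalar i) j
      simp [h1] at this
      simp [← this]
    unfold mobSL
    have : ((g * z : SL(2,ℤ)) : Matrix (Fin 2) (Fin 2) ℤ) = -(g : Matrix (Fin 2) (Fin 2) ℤ) := by
      rw [Matrix.SpecialLinearGroup.coe_mul, hzmat]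
      simp
    rw [this]
    have hmap : ((-(g : Matrix (Fin 2) (Fin 2) ℤ)).map (Int.cast : ℤ → ℝ))
        = -(((g : Matrix (Fin 2) (Fin 2) ℤ)).map (Int.cast : ℤ → ℝ)) := by
      ext i j
      simp
    rw [hmap, mobAux_neg]

/-- Möbius action of an element of `PSL(2,ℤ)` on `ℝ ∪ {∞}`. -/
def mob (x : PSL(2, ℤ)) : OnePoint ℝ → OnePoint ℝ :=
  Quotient.liftOn' x mobSL (by
    intro g h hgh
    have hmem : g⁻¹ * h ∈ Subgroup.center SL(2, ℤ) := QuotientGroup.leftRel_apply.mp hgh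
    have : h = g * (g⁻¹ * h) := by group
    rw [this, mobSL_mul_center g _ hmem])

end Farey

namespace Farey

/-- The matrix `A = [[1,-2],[1,-1]]` as an element of `SL(2,ℤ)`. -/
def A : SL(2, ℤ) := ⟨!![1, -2; 1, -1], by norm_num [Matrix.det_fin_two_of]⟩

/-- The matrix `B = [[0,-1],[1,0]]` as an element of `SL(2,ℤ)`. -/
def B : SL(2, ℤ) := ⟨!![0, -1; 1, 0], by norm_num [Matrix.det_fin_two_of]⟩

/-- The matrix `C = [[1,-1],[2,-1]]` as an element of `SL(2,ℤ)`. -/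
def C : SL(2, ℤ) := ⟨!![1, -1; 2, -1], by norm_num [Matrix.det_fin_two_of]⟩

/-- The element `a ∈ PSL(2,ℤ)`. -/
def a : PSL(2, ℤ) := QuotientGroup.mk A

/-- The element `b ∈ PSL(2,ℤ)`. -/
def b : PSL(2, ℤ) := QuotientGroup.mk B

/-- The element `c ∈ PSL(2,ℤ)`. -/
def c : PSL(2, ℤ) := QuotientGroup.mk C

/-- The Farey group: the subgroup of `PSL(2,ℤ)` generated by `a`, `b`, `c`. -/
def fareyGroup : Subgroup PSL(2, ℤ) := Subgroup.closure {a, b, c}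

/-- The word length of an element of `PSL(2,ℤ)` with respect to the generators
`a`, `b`, `c` of the Farey group. -/
def wordLength (x : PSL(2, ℤ)) : ℕ :=
  sInf {n | ∃ l : List PSL(2, ℤ), l.length = n ∧ (∀ s ∈ l, s = a ∨ s = b ∨ s = c) ∧ l.prod = x}

/-- The sphere of radius `n` in the Farey group for the word metric w.r.t. `{a,b,c}`. -/
def sphere (n : ℕ) : Set PSL(2, ℤ) := {x | x ∈ fareyGroup ∧ wordLength x = n}

end Farey

namespace Farey

/-- The mediant of two rationals, `p₁/q₁ ⊕ p₂/q₂ = (p₁+p₂)/(q₁+q₂)` (in lowest terms). -/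
def mediant (p q : ℚ) : ℚ := ((p.num + q.num : ℤ) : ℚ) / (((p.den : ℤ) + (q.den : ℤ) : ℤ) : ℚ)

/-- Insert the mediant between every two consecutive entries of a list of rationals. -/
def insertMediants : List ℚ → List ℚ
  | p :: q :: rest => p :: mediant p q :: insertMediants (q :: rest)
  | l => l

/-- The Farey sequences: `F_0 = (0,1)`, and `F_{n+1}` is obtained from `F_n` by inserting
mediants between consecutive terms. -/
def fareySeq : ℕ → List ℚ
  | 0 => [0, 1]
  | n + 1 => insertMediants (fareySeq n)

/-- `p, q` are consecutive terms of the Farey sequence `F_n`. -/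
def IsFareyPairIn (n : ℕ) (p q : ℚ) : Prop :=
  ∃ i : ℕ, (fareySeq n)[i]? = some p ∧ (fareySeq n)[i + 1]? = some q

/-- `p, q` form a Farey pair: they are consecutive terms of some Farey sequence. -/
def IsFareyPair (p q : ℚ) : Prop := ∃ n : ℕ, IsFareyPairIn n p q

/-- The `k`-th summand (`k = 0, 1, 2, …`) in the series defining Minkowski's question mark
function: `(−1)^k 2^{−(a₁+⋯+a_{k+1})}` when the continued fraction expansion
`x = [a₀; a₁, a₂, …]` has at least `k+1` partial denominators and `0` otherwise. -/
def qmTerm (x : ℝ) (k : ℕ) : ℝ :=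
  match (List.range (k + 1)).mapM (fun i => (GenContFract.of x).partDens.get? i) with
  | none => 0
  | some l => (-1 : ℝ) ^ k * (2 : ℝ) ^ (-(l.sum))

/-- Minkowski's question mark function on `[0,1]`:
`?(x) = 2 ∑_{k≥1} (−1)^{k+1} 2^{−(a₁+⋯+a_k)}` for `x = [0; a₁, a₂, …]`, `?(1) = 1`. -/
def questionMark (x : ℝ) : ℝ := if x = 1 then 1 else 2 * ∑' k : ℕ, qmTerm x k

/-- The extended Minkowski function `M̄(q) = (1/3)(∑_{k=−∞}^{m−1} 2^{−|k|} + ?(q−m)·2^{−|m|})`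
for `q ∈ [m, m+1]`. -/
def extM (q : ℝ) : ℝ :=
  (1 / 3) * ((∑' j : ℕ, (2 : ℝ) ^ (-|⌊q⌋ - 1 - (j : ℤ)|)) +
    questionMark (q - ⌊q⌋) * (2 : ℝ) ^ (-|⌊q⌋|))

instance : MeasurableSpace (OnePoint ℝ) := borel _
instance : BorelSpace (OnePoint ℝ) := ⟨rfl⟩

/-- `μ` is the extended Minkowski measure: the Borel probability measure on `ℝ ∪ {∞}` giving
no mass to `{∞}` whose cumulative distribution function is the extended Minkowski function. -/
def IsExtMinkowskiMeasure (μ : Measure (OnePoint ℝ)) : Prop :=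
  IsProbabilityMeasure μ ∧ μ {∞} = 0 ∧
    ∀ u v : ℝ, u ≤ v →
      μ ((fun r : ℝ => (r : OnePoint ℝ)) '' Set.Ico u v) = ENNReal.ofReal (extM v - extM u)

end Farey

namespace Farey

open UpperHalfPlane Complex

/-! ### Auxiliary: action of `PSL(2,ℤ)` on the upper half plane -/

noncomputable def slPerm : SL(2, ℤ) →* Equiv.Perm ℍ := MulAction.toPermHom SL(2,ℤ) ℍ

lemma center_le_ker : Subgroup.center SL(2,ℤ) ≤ slPerm.ker := by
  intro z hz
  obtain ⟨r, hr, hscalar⟩ := Matrix.SpecialLinearGroup.mem_center_iff.mp hz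
  have hr' : r = 1 ∨ r = -1 := Int.isUnit_iff.mp (IsUnit.of_mul_eq_one (r ^ 1) (by
      simpa [pow_succ, Fintype.card_fin] using hr))
  have hcases : z = 1 ∨ z = -1 := by
    rcases hr' with h1 | h1
    · left; ext i j; have := congrFun (congrFun hscalar i) j; simp [h1] at this; simp [← this]
    · right; ext i j; have := congrFun (congrFun hscalar i) j; simp [h1] at this; simp [← this]
  rcases hcases with rfl | rfl
  · exact slPerm.map_one
  · ext w
    show ((((-1 : SL(2,ℤ)) • w) : ℍ) : ℂ) = (w : ℂ)
    rw [ModularGroup.SL_neg_smul, one_smul]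

noncomputable def pslPerm : PSL(2,ℤ) →* Equiv.Perm ℍ :=
  QuotientGroup.lift _ slPerm center_le_ker

noncomputable instance pslAction : MulAction PSL(2,ℤ) ℍ := MulAction.compHom ℍ pslPerm

lemma mk_smul (g : SL(2,ℤ)) (z : ℍ) : (QuotientGroup.mk g : PSL(2,ℤ)) • z = g • z := rfl

/-! ### Auxiliary: the Möbius maps of `A`, `B`, `C` on `ℍ` -/

lemma coe_smul_A (z : ℍ) : ((A • z : ℍ) : ℂ) = ((z:ℂ) - 2)/((z:ℂ) - 1) := by
  rw [UpperHalfPlane.specialLinearGroup_apply]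
  simp [A]
  ring_nf

lemma coe_smul_B (z : ℍ) : ((B • z : ℍ) : ℂ) = (-1)/(z:ℂ) := by
  rw [UpperHalfPlane.specialLinearGroup_apply]
  simp [B]

lemma coe_smul_C (z : ℍ) : ((C • z : ℍ) : ℂ) = ((z:ℂ) - 1)/(2*(z:ℂ) - 1) := by
  rw [UpperHalfPlane.specialLinearGroup_apply]
  simp [C]
  ring_nf

/-! ### Auxiliary: complex inequalities for ping-pong -/

lemma lemA {w : ℂ} (him : 0 < w.im) (h : w.re < 1) : 1 < ((w - 2)/(w - 1)).re := by
  have hD : 0 < normSq (w - 1) := by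
    rw [Complex.normSq_pos]; intro hw; rw [sub_eq_zero] at hw
    rw [hw] at him; simp at him
  rw [div_re, normSq_apply] at *
  simp only [sub_re, sub_im, one_re, one_im, ofReal_re, re_ofNat, im_ofNat] at *
  rw [← add_div, lt_div_iff₀ hD]
  nlinarith [sq_nonneg w.im]

lemma lemB {w : ℂ} (him : 0 < w.im) (h : 0 < w.re) : ((-1)/w).re < 0 := by
  have hD : 0 < normSq w := by
    rw [Complex.normSq_pos]; intro hw; rw [hw] at him; simp at him
  rw [div_re, normSq_apply] at *
  simp only [neg_re, neg_im, one_re, one_im] at *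
  rw [← add_div, div_neg_iff]
  right
  refine ⟨?_, hD⟩
  have e : -1 * w.re + -0 * w.im = -w.re := by ring
  rw [e]; linarith

lemma lemC {w : ℂ} (h : 1/4 < normSq (w - 1/2)) :
    normSq ((w - 1)/(2*w - 1) - 1/2) < 1/4 := by
  have hd : (2*w - 1) ≠ 0 := by
    intro hw
    have hw2 : w - 1/2 = 0 := by linear_combination hw/2
    rw [hw2, map_zero] at h; norm_num at h
  have key : (w - 1)/(2*w - 1) - 1/2 = -1/(2*(2*w - 1)) := by
    rw [div_sub_div _ _ hd two_ne_zero, div_eq_div_iff (mul_ne_zero hd two_ne_zero) (mul_ne_zero two_ne_zero hd)]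
    ring
  rw [key, map_div₀, normSq_neg, normSq_one, _root_.map_mul]
  have h2 : normSq (2*w - 1) = 4 * normSq (w - 1/2) := by
    have e : (2:ℂ)*w - 1 = 2 * (w - 1/2) := by ring
    rw [e, _root_.map_mul]
    norm_num [normSq_apply]
  have h4 : normSq (2:ℂ) = 4 := by norm_num [normSq_apply]
  rw [h4, h2]
  rw [div_lt_iff₀ (by nlinarith [normSq_nonneg (w - 1/2)])]
  nlinarith

lemma normSq_half (w : ℂ) : normSq (w - 1/2) = (w.re - 1/2)^2 + w.im^2 := by
  rw [normSq_apply]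
  simp only [sub_re, sub_im]
  norm_num
  ring

lemma out_of_disk {w : ℂ} (h : 1 < w.re ∨ w.re < 0) : 1/4 < normSq (w - 1/2) := by
  rw [normSq_half]
  rcases h with h | h <;> nlinarith [sq_nonneg w.im]

lemma in_disk {w : ℂ} (h : normSq (w - 1/2) < 1/4) : 0 < w.re ∧ w.re < 1 := by
  rw [normSq_half] at h
  constructor <;> nlinarith [sq_nonneg w.im, sq_nonneg (w.re - 1/2)]

/-! ### The ping-pong sets -/

def XA : Set ℍ := {z : ℍ | 1 < (z:ℂ).re}
def XB : Set ℍ := {z : ℍ | (z:ℂ).re < 0}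
def XC : Set ℍ := {z : ℍ | normSq ((z:ℂ) - 1/2) < 1/4}

def X : Fin 3 → Set ℍ := ![XA, XB, XC]

lemma hXnonempty : ∀ i, (X i).Nonempty := by
  intro i
  fin_cases i
  · refine ⟨⟨2 + Complex.I, by simp⟩, ?_⟩
    show 1 < ((2 + Complex.I : ℂ)).re
    norm_num
  · refine ⟨⟨-1 + Complex.I, by simp⟩, ?_⟩
    show ((-1 + Complex.I : ℂ)).re < 0
    norm_num
  · refine ⟨⟨1/2 + Complex.I/4, by norm_num [Complex.add_im]⟩, ?_⟩
    show normSq ((1/2 + Complex.I/4 : ℂ) - 1/2) < 1/4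
    have e : (1/2 + Complex.I/4 : ℂ) - 1/2 = Complex.I/4 := by ring
    rw [e]
    norm_num [normSq_apply]

lemma dAB : Disjoint XA XB := by
  rw [Set.disjoint_left]; intro z h1 h2
  simp only [XA, XB, Set.mem_setOf_eq] at h1 h2
  linarith

lemma dAC : Disjoint XA XC := by
  rw [Set.disjoint_left]; intro z h1 h2
  simp only [XA, XC, Set.mem_setOf_eq] at h1 h2
  have := (in_disk h2).2
  linarith

lemma dBC : Disjoint XB XC := by
  rw [Set.disjoint_left]; intro z h1 h2
  simp only [XB, XC, Set.mem_setOf_eq] at h1 h2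
  have := (in_disk h2).1
  linarith

lemma hXdisj : Pairwise (Function.onFun Disjoint X) := by
  intro i j hij
  fin_cases i <;> fin_cases j <;>
    simp only [Function.onFun, X, Matrix.cons_val_zero, Matrix.cons_val_one, Matrix.head_cons,
      Matrix.cons_val_two, Matrix.tail_cons] at * <;>
    first
      | exact absurd rfl hij
      | exact dAB | exact dAC | exact dBC
      | exact dAB.symm | exact dAC.symm | exact dBC.symm

/-! ### The ping-pong moves -/

lemma a_smul_mem {z : ℍ} (hz : (z:ℂ).re < 1) : a • z ∈ XA := by
  show 1 < ((a • z : ℍ):ℂ).re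
  rw [a, mk_smul, coe_smul_A]
  exact lemA z.im_pos hz

lemma b_smul_mem {z : ℍ} (hz : 0 < (z:ℂ).re) : b • z ∈ XB := by
  show ((b • z : ℍ):ℂ).re < 0
  rw [b, mk_smul, coe_smul_B]
  exact lemB z.im_pos hz

lemma c_smul_mem {z : ℍ} (hz : 1/4 < normSq ((z:ℂ) - 1/2)) : c • z ∈ XC := by
  show normSq (((c • z : ℍ):ℂ) - 1/2) < 1/4
  rw [c, mk_smul, coe_smul_C]
  exact lemC hz

end Farey

open Farey

open Pointwise

/-- **Theorem (presentation of the Farey group).** The Farey group is isomorphic to the free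
product `ℤ/2 * ℤ/2 * ℤ/2`: the canonical homomorphism from `(ℤ/2) * (ℤ/2) * (ℤ/2)` to
`PSL(2,ℤ)` sending the three generators of the free factors to `a`, `b`, `c` respectively is
injective, and its image is `Γ`. -/
theorem farey_free_product
    (φ : Monoid.CoprodI (fun _ : Fin 3 => Multiplicative (ZMod 2)) →* PSL(2, ℤ))
    (ha : φ (Monoid.CoprodI.of (i := 0) (Multiplicative.ofAdd (1 : ZMod 2))) = a)
    (hb : φ (Monoid.CoprodI.of (i := 1) (Multiplicative.ofAdd (1 : ZMod 2))) = b)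
    (hc : φ (Monoid.CoprodI.of (i := 2) (Multiplicative.ofAdd (1 : ZMod 2))) = c) :
    Function.Injective φ ∧ φ.range = fareyGroup := by
    classical
  have hgen : ∀ h : Multiplicative (ZMod 2), h ≠ 1 → h = Multiplicative.ofAdd 1 := by decide
  have hall : ∀ m : Multiplicative (ZMod 2), m = 1 ∨ m = Multiplicative.ofAdd 1 := by decide
  let f : ∀ i : Fin 3, Multiplicative (ZMod 2) →* PSL(2,ℤ) :=
    fun i => φ.comp (Monoid.CoprodI.of (M := fun _ : Fin 3 => Multiplicative (ZMod 2)) (i := i))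
  have hφ : Monoid.CoprodI.lift f = φ := by
    apply Monoid.CoprodI.ext_hom
    intro i
    ext m
    simp [Monoid.CoprodI.lift_of, f]
  have hpp : Pairwise fun i j => ∀ h : Multiplicative (ZMod 2),
      h ≠ 1 → f i h • X j ⊆ X i := by
    intro i j hij h hh
    rw [hgen h hh]
    fin_cases i <;> fin_cases j <;>
        first
          | exact absurd rfl hij
          | (rintro x ⟨z, hz, rfl⟩
             first
              | · show f 0 (Multiplicative.ofAdd 1) • z ∈ XA
                  rw [show f 0 (Multiplicative.ofAdd 1) = a from ha]
                  refine a_smul_mem ?_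
                  first
                    | (have hz' : (z:ℂ).re < 0 := hz; linarith)
                    | (have hz' := (in_disk hz).2; linarith)
              | · show f 1 (Multiplicative.ofAdd 1) • z ∈ XB
                  rw [show f 1 (Multiplicative.ofAdd 1) = b from hb]
                  refine b_smul_mem ?_
                  first
                    | (have hz' : 1 < (z:ℂ).re := hz; linarith)
                    | (have hz' := (in_disk hz).1; linarith)
              | · show f 2 (Multiplicative.ofAdd 1) • z ∈ XC
                  rw [show f 2 (Multiplicative.ofAdd 1) = c from hc]
                  refine c_smul_mem (out_of_disk ?_)
                  first
                    | exact Or.inl hz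
                    | exact Or.inr hz)
  have hinj : Function.Injective (Monoid.CoprodI.lift f) :=
    Monoid.CoprodI.lift_injective_of_ping_pong f (Or.inl (by simp)) X
      hXnonempty hXdisj hpp
  rw [← hφ]
  refine ⟨hinj, ?_⟩
  apply le_antisymm
  · rintro x ⟨y, rfl⟩
    induction y using Monoid.CoprodI.induction_on with
    | one => simpa using Subgroup.one_mem fareyGroup
    | of i m =>
        rcases hall m with rfl | rfl
        · simpa using Subgroup.one_mem fareyGroup
        · rw [Monoid.CoprodI.lift_of]
          fin_cases i
          · rw [show f 0 (Multiplicative.ofAdd 1) = a from ha]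
            exact Subgroup.subset_closure (by simp)
          · rw [show f 1 (Multiplicative.ofAdd 1) = b from hb]
            exact Subgroup.subset_closure (by simp)
          · rw [show f 2 (Multiplicative.ofAdd 1) = c from hc]
            exact Subgroup.subset_closure (by simp)
    | mul x y hx hy =>
        rw [_root_.map_mul]
        exact Subgroup.mul_mem _ hx hy
  · rw [fareyGroup]
    rw [Subgroup.closure_le]
    rintro x hx
    simp only [Set.mem_insert_iff, Set.mem_singleton_iff] at hx
    rcases hx with rfl | rfl | rfl
    · exact ⟨Monoid.CoprodI.of (Multiplicative.ofAdd (1 : ZMod 2)),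
        by rw [Monoid.CoprodI.lift_of]; exact ha⟩
    · exact ⟨Monoid.CoprodI.of (Multiplicative.ofAdd (1 : ZMod 2)),
        by rw [Monoid.CoprodI.lift_of]; exact hb⟩
    · exact ⟨Monoid.CoprodI.of (Multiplicative.ofAdd (1 : ZMod 2)),
        by rw [Monoid.CoprodI.lift_of]; exact hc⟩
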